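/- With the notation Q(Y,y) = (φ(Y)+y)² − 4y·B(y)·x̂(Y) as above, the second diagonal derivatives satisfy ∂_Y² Q(Y,Y) = 2φ'(Y) and ∂_y ∂_Y Q(Y,Y) = −2φ'(Y), at every Y with B(Y)+Y·B'(Y) ≠ 0. -/

import Mathlib

lemma stmt6_aux_phi (B : ℂ → ℂ) (hB : ∀ z, AnalyticAt ℂ B z) {z : ℂ}
    (hz : B z + z * deriv B z ≠ 0) :
    HasDerivAt (fun Z => Z * (B Z - Z * deriv B Z) / (B Z + Z * deriv B Z))
      (((B z - z * deriv B z - z ^ 2 * deriv (deriv B) z) * (B z + z * deriv B z)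
        - z * (B z - z * deriv B z) * (2 * deriv B z + z * deriv (deriv B) z))
        / (B z + z * deriv B z) ^ 2) z := by
  have hB1 : ∀ w, AnalyticAt ℂ (deriv B) w := fun w =>
    (AnalyticOnNhd.deriv (fun u _ => hB u)) w (Set.mem_univ w)
  have h1 : HasDerivAt B (deriv B z) z := (hB z).differentiableAt.hasDerivAt
  have h2 : HasDerivAt (deriv B) (deriv (deriv B) z) z := (hB1 z).differentiableAt.hasDerivAt
  have hnum : HasDerivAt (fun Z => Z * (B Z - Z * deriv B Z))
      (1 * (B z - z * deriv B z) + z * (deriv B z - (1 * deriv B z + z * deriv (deriv B) z))) z :=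
    (hasDerivAt_id z).mul (h1.sub ((hasDerivAt_id z).mul h2))
  have hden : HasDerivAt (fun Z => B Z + Z * deriv B Z)
      (deriv B z + (1 * deriv B z + z * deriv (deriv B) z)) z :=
    h1.add ((hasDerivAt_id z).mul h2)
  have := hnum.div hden hz
  refine this.congr_deriv ?_
  ring

lemma stmt6_aux_c (B : ℂ → ℂ) (hB : ∀ z, AnalyticAt ℂ B z) {z : ℂ}
    (hz : B z + z * deriv B z ≠ 0) :
    HasDerivAt (fun Z => Z * B Z / (B Z + Z * deriv B Z) ^ 2)
      (((B z + z * deriv B z) * (B z + z * deriv B z) ^ 2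
        - z * B z * (2 * (B z + z * deriv B z) * (2 * deriv B z + z * deriv (deriv B) z)))
        / ((B z + z * deriv B z) ^ 2) ^ 2) z := by
  have hB1 : ∀ w, AnalyticAt ℂ (deriv B) w := fun w =>
    (AnalyticOnNhd.deriv (fun u _ => hB u)) w (Set.mem_univ w)
  have h1 : HasDerivAt B (deriv B z) z := (hB z).differentiableAt.hasDerivAt
  have h2 : HasDerivAt (deriv B) (deriv (deriv B) z) z := (hB1 z).differentiableAt.hasDerivAt
  have hnum : HasDerivAt (fun Z => Z * B Z) (1 * B z + z * deriv B z) z :=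
    (hasDerivAt_id z).mul h1
  have hD : HasDerivAt (fun Z => B Z + Z * deriv B Z)
      (deriv B z + (1 * deriv B z + z * deriv (deriv B) z)) z :=
    h1.add ((hasDerivAt_id z).mul h2)
  have hden : HasDerivAt (fun Z => (B Z + Z * deriv B Z) ^ 2)
      (2 * (B z + z * deriv B z) ^ 1 * (deriv B z + (1 * deriv B z + z * deriv (deriv B) z))) z :=
    hD.pow 2
  have := hnum.div hden (pow_ne_zero 2 hz)
  refine this.congr_deriv ?_
  ring

/-- second diagonal derivatives of Q:
∂_Y² Q(Y,Y) = 2φ'(Y) and ∂_y∂_Y Q(Y,Y) = −2φ'(Y). -/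
theorem stmt6 (B : ℂ → ℂ) (hB : ∀ z, AnalyticAt ℂ B z)
    (Q : ℂ → ℂ → ℂ)
    (hQ : ∀ Z y, Q Z y = (Z * (B Z - Z * deriv B Z) / (B Z + Z * deriv B Z) + y) ^ 2
      - 4 * y * B y * (Z * B Z / (B Z + Z * deriv B Z) ^ 2))
    (Y : ℂ) (hden : B Y + Y * deriv B Y ≠ 0) :
    deriv (fun z => deriv (fun w => Q w Y) z) Y
        = 2 * deriv (fun Z => Z * (B Z - Z * deriv B Z) / (B Z + Z * deriv B Z)) Y ∧
    deriv (fun y => deriv (fun w => Q w y) Y) Y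
        = -2 * deriv (fun Z => Z * (B Z - Z * deriv B Z) / (B Z + Z * deriv B Z)) Y := by
  set φ : ℂ → ℂ := fun Z => Z * (B Z - Z * deriv B Z) / (B Z + Z * deriv B Z) with hφdef
  set c : ℂ → ℂ := fun Z => Z * B Z / (B Z + Z * deriv B Z) ^ 2 with hcdef
  have hB1 : ∀ w, AnalyticAt ℂ (deriv B) w := fun w =>
    (AnalyticOnNhd.deriv (fun u _ => hB u)) w (Set.mem_univ w)
  -- the open set where the denominator does not vanish
  set U : Set ℂ := {z | B z + z * deriv B z ≠ 0} with hUdef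
  have hDcont : Continuous (fun z => B z + z * deriv B z) := by
    have h1 : Continuous B := continuous_iff_continuousAt.2 fun z => (hB z).continuousAt
    have h2 : Continuous (deriv B) := continuous_iff_continuousAt.2 fun z => (hB1 z).continuousAt
    continuity
  have hUopen : IsOpen U := isOpen_ne.preimage hDcont
  have hYU : Y ∈ U := hden
  have hUnhds : U ∈ nhds Y := hUopen.mem_nhds hYU
  -- first partial derivative of Q
  have hpart : ∀ (y : ℂ) {z : ℂ}, z ∈ U →
      deriv (fun w => Q w y) z = 2 * (φ z + y) * deriv φ z - 4 * y * B y * deriv c z := by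
    intro y z hz
    have hz' : B z + z * deriv B z ≠ 0 := hz
    have hφz := stmt6_aux_phi B hB hz'
    have hcz := stmt6_aux_c B hB hz'
    have hfun : (fun w => Q w y) = fun w => (φ w + y) ^ 2 - 4 * y * B y * c w := by
      funext w; exact hQ w y
    rw [hfun]
    have h : HasDerivAt (fun w => (φ w + y) ^ 2 - 4 * y * B y * c w) _ z :=
      ((hφz.add_const y).pow 2).sub (hcz.const_mul (4 * y * B y))
    rw [h.deriv, hφz.deriv, hcz.deriv]
    simp only [Nat.cast_ofNat, Nat.reduceSub, pow_one]
    ring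
  -- analyticity of φ and c on U
  have hφa : AnalyticOnNhd ℂ φ U := by
    intro z hz
    exact ((analyticAt_id.mul ((hB z).sub (analyticAt_id.mul (hB1 z)))).div
      ((hB z).add (analyticAt_id.mul (hB1 z))) hz)
  have hca : AnalyticOnNhd ℂ c U := by
    intro z hz
    exact ((analyticAt_id.mul (hB z)).div
      (((hB z).add (analyticAt_id.mul (hB1 z))).pow 2) (pow_ne_zero 2 hz))
  have hφa' : AnalyticOnNhd ℂ (deriv φ) U := hφa.deriv
  have hca' : AnalyticOnNhd ℂ (deriv c) U := hca.deriv
  have hφY := stmt6_aux_phi B hB hden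
  have hcY := stmt6_aux_c B hB hden
  -- the key first-order identity: deriv φ = D * deriv c on U
  have hI1 : ∀ z ∈ U, deriv φ z = (B z + z * deriv B z) * deriv c z := by
    intro z hz
    have hz' : B z + z * deriv B z ≠ 0 := hz
    rw [(stmt6_aux_phi B hB hz').deriv, (stmt6_aux_c B hB hz').deriv]
    field_simp
    ring
  constructor
  · -- second derivative in the first variable
    have hev : (fun z => deriv (fun w => Q w Y) z)
        =ᶠ[nhds Y] fun z => 2 * (φ z + Y) * deriv φ z - 4 * Y * B Y * deriv c z := by
      filter_upwards [hUnhds] with z hz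
      exact hpart Y hz
    rw [hev.deriv_eq]
    -- derivatives at Y of the pieces
    have hφ'Y : HasDerivAt (deriv φ) (deriv (deriv φ) Y) Y :=
      (hφa' Y hYU).differentiableAt.hasDerivAt
    have hc'Y : HasDerivAt (deriv c) (deriv (deriv c) Y) Y :=
      (hca' Y hYU).differentiableAt.hasDerivAt
    have hφY' : HasDerivAt φ (deriv φ Y) Y := (hφa Y hYU).differentiableAt.hasDerivAt
    have hg : HasDerivAt (fun z => 2 * (φ z + Y) * deriv φ z - 4 * Y * B Y * deriv c z)
        ((2 * deriv φ Y) * deriv φ Y + (2 * (φ Y + Y)) * deriv (deriv φ) Y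
          - 4 * Y * B Y * deriv (deriv c) Y) Y := by
      have h1 := (((hφY'.add_const Y).const_mul 2).mul hφ'Y).sub (hc'Y.const_mul (4 * Y * B Y))
      exact h1
    rw [hg.deriv]
    -- second-order relation coming from hI1
    have hIev : deriv φ =ᶠ[nhds Y] fun z => (B z + z * deriv B z) * deriv c z := by
      filter_upwards [hUnhds] with z hz
      exact hI1 z hz
    have hDY : HasDerivAt (fun z => B z + z * deriv B z)
        (deriv B Y + (1 * deriv B Y + Y * deriv (deriv B) Y)) Y :=
      (hB Y).differentiableAt.hasDerivAt.add
        ((hasDerivAt_id Y).mul (hB1 Y).differentiableAt.hasDerivAt)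
    have hSS : deriv (deriv φ) Y
        = (deriv B Y + (1 * deriv B Y + Y * deriv (deriv B) Y)) * deriv c Y
          + (B Y + Y * deriv B Y) * deriv (deriv c) Y := by
      rw [hIev.deriv_eq]
      exact (hDY.mul hc'Y).deriv
    rw [hSS, hφY.deriv, hcY.deriv]
    have hφYval : φ Y = Y * (B Y - Y * deriv B Y) / (B Y + Y * deriv B Y) := rfl
    rw [hφYval]
    generalize deriv (deriv c) Y = T
    field_simp
    ring
  · -- mixed second derivative
    have hGfun : (fun y => deriv (fun w => Q w y) Y)
        = fun y => 2 * (φ Y + y) * deriv φ Y - 4 * y * B y * deriv c Y := by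
      funext y; exact hpart y hYU
    rw [hGfun]
    have hBY : HasDerivAt B (deriv B Y) Y := (hB Y).differentiableAt.hasDerivAt
    have hg : HasDerivAt (fun y => 2 * (φ Y + y) * deriv φ Y - 4 * y * B y * deriv c Y)
        (2 * deriv φ Y - (4 * B Y + 4 * Y * deriv B Y) * deriv c Y) Y := by
      have h1 : HasDerivAt (fun y => 2 * (φ Y + y) * deriv φ Y) (2 * deriv φ Y) Y := by
        have := (((hasDerivAt_id Y).const_add (φ Y)).const_mul 2).mul_const (deriv φ Y)
        refine this.congr_deriv ?_
        ring
      have h2 : HasDerivAt (fun y => 4 * y * B y * deriv c Y)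
          ((4 * B Y + 4 * Y * deriv B Y) * deriv c Y) Y := by
        have := ((((hasDerivAt_id Y).const_mul 4).mul hBY)).mul_const (deriv c Y)
        refine this.congr_deriv ?_
        simp only [id_eq]
        ring
      exact h1.sub h2
    rw [hg.deriv, hφY.deriv, hcY.deriv]
    field_simp
    ring
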